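/- Let Ω be a regular uncountable cardinal such that for every ordinal α < ord(Ω) there is no surjection from V_α = {x : x is a ZF-set of rank < α} onto a set of cardinality Ω. Let P be the poset whose conditions are the finite partial functions p defined on pairs (α,n), with α an ordinal, 0 < α < ord(Ω), and n a natural number, such that p(α,n) is a ZF-set of rank less than α, ordered by reverse inclusion. Then P has the Ω-chain condition: there is no family (p_β)_{β<Ω} of pairwise incompatible conditions of P; equivalently, every pairwise-incompatible subset of P has cardinality strictly less than Ω. -/

import Mathlib

universe u

open Cardinal

/-- A condition of the forcing: a finite partial function `p`, defined on pairs `(α, n)` with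
`α` an ordinal, `0 < α < Λ`, and `n` a natural number, such that `p (α, n)` is a ZF-set of rank
less than `α`.  We code `p` as its (functional) graph. -/
def IsCond (Λ : Ordinal.{u}) (p : Set ((Ordinal.{u} × ℕ) × ZFSet.{u})) : Prop :=
  p.Finite ∧
    (∀ a x y, (a, x) ∈ p → (a, y) ∈ p → x = y) ∧
    ∀ a x, (a, x) ∈ p → 0 < a.1 ∧ a.1 < Λ ∧ x.rank < a.1

/-- The poset of conditions. -/
def Cond (Λ : Ordinal.{u}) : Type (u + 1) :=
  {p : Set ((Ordinal.{u} × ℕ) × ZFSet.{u}) // IsCond Λ p}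

/-- Conditions are ordered by reverse inclusion: `p ≤ q` iff `p` extends `q`. -/
instance (Λ : Ordinal.{u}) : PartialOrder (Cond Λ) where
  le p q := q.1 ⊆ p.1
  le_refl p := Set.Subset.refl _
  le_trans p q r hpq hqr := Set.Subset.trans hqr hpq
  le_antisymm p q hpq hqp := Subtype.ext (Set.Subset.antisymm hqp hpq)

/-- Two conditions are compatible iff they have a common extension. -/
def Compat {Λ : Ordinal.{u}} (p q : Cond Λ) : Prop :=
  ∃ r, r ≤ p ∧ r ≤ q

theorem exists_conflict {Λ : Ordinal.{u}} {p q : Cond Λ} (h : ¬ Compat p q) :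
    ∃ a x y, (a, x) ∈ p.1 ∧ (a, y) ∈ q.1 ∧ x ≠ y := by
  by_contra hc
  push_neg at hc
  apply h
  have hfun : ∀ a x y, (a, x) ∈ p.1 ∪ q.1 → (a, y) ∈ p.1 ∪ q.1 → x = y := by
    rintro a x y (hx | hx) (hy | hy)
    · exact p.2.2.1 a x y hx hy
    · exact hc a x y hx hy
    · exact (hc a y x hy hx).symm
    · exact q.2.2.1 a x y hx hy
  refine ⟨⟨p.1 ∪ q.1, p.2.1.union q.2.1, hfun, ?_⟩, ?_, ?_⟩
  · rintro a x (hx | hx)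
    · exact p.2.2.2 a x hx
    · exact q.2.2.2 a x hx
  · exact fun z hz => Or.inl hz
  · exact fun z hz => Or.inr hz

universe v

theorem my_deltaSystem {κ : Cardinal.{v}} (hreg : κ.IsRegular) (hunc : ℵ₀ < κ)
    {X : Type v} [DecidableEq X] :
    ∀ (n : ℕ) {ι : Type v} (a : ι → Finset X), (∀ i, (a i).card ≤ n) → κ ≤ #ι →
      ∃ (r : Finset X) (T : Set ι), κ ≤ #T ∧
        ∀ i ∈ T, ∀ j ∈ T, i ≠ j → a i ∩ a j = r := by
  have hℵ : ℵ₀ ≤ κ := hreg.aleph0_le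
  intro n
  induction n with
  | zero =>
    intro ι a hn hι
    refine ⟨∅, Set.univ, by rwa [mk_univ], ?_⟩
    intro i _ j _ _
    have : a i = ∅ := Finset.card_eq_zero.mp (Nat.le_zero.mp (hn i))
    simp [this]
  | succ n IH =>
    intro ι a hn hι
    by_cases h : ∃ x : X, κ ≤ #{i : ι // x ∈ a i}
    · obtain ⟨x, hx⟩ := h
      obtain ⟨r, T, hT, hprop⟩ := IH (fun i : {i : ι // x ∈ a i} => (a i.1).erase x)
        (fun i => by
          have h1 := Finset.card_erase_of_mem i.2
          have h2 := hn i.1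
          omega)
        hx
      refine ⟨insert x r, Subtype.val '' T, ?_, ?_⟩
      · rwa [mk_image_eq Subtype.val_injective]
      · rintro _ ⟨i, hiT, rfl⟩ _ ⟨j, hjT, rfl⟩ hij
        have hij' : i ≠ j := fun e => hij (by rw [e])
        have hr := hprop i hiT j hjT hij'
        ext z
        simp only [Finset.mem_inter, Finset.mem_insert]
        constructor
        · rintro ⟨hzi, hzj⟩
          by_cases hzx : z = x
          · exact Or.inl hzx
          · refine Or.inr ?_
            rw [← hr]
            simp [Finset.mem_erase, hzx, hzi, hzj]
        · rintro (rfl | hz)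
          · exact ⟨i.2, j.2⟩
          · rw [← hr] at hz
            simp only [Finset.mem_inter, Finset.mem_erase] at hz
            exact ⟨hz.1.2, hz.2.2⟩
    · push_neg at h
      have hzorn : ∀ c ⊆ {T : Set ι | ∀ i ∈ T, ∀ j ∈ T, i ≠ j → a i ∩ a j = ∅},
          IsChain (· ⊆ ·) c → ∃ ub ∈ {T : Set ι | ∀ i ∈ T, ∀ j ∈ T, i ≠ j → a i ∩ a j = ∅},
            ∀ s ∈ c, s ⊆ ub := by
        intro c hc hchain
        refine ⟨⋃₀ c, ?_, fun s hs => Set.subset_sUnion_of_mem hs⟩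
        rintro i ⟨s, hs, his⟩ j ⟨t, ht, hjt⟩ hij
        rcases hchain.total hs ht with hst | hts
        · exact hc ht i (hst his) j hjt hij
        · exact hc hs i his j (hts hjt) hij
      obtain ⟨T, hTmax⟩ := zorn_subset
        {T : Set ι | ∀ i ∈ T, ∀ j ∈ T, i ≠ j → a i ∩ a j = ∅} hzorn
      refine ⟨∅, T, ?_, fun i hi j hj hij => hTmax.1 i hi j hj hij⟩
      by_contra hTlt
      push_neg at hTlt
      set B : Set X := ⋃ i : T, ((a i.1 : Set X)) with hBdef
      have hB : #B < κ := by
        refine lt_of_le_of_lt (mk_iUnion_le _) ?_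
        refine mul_lt_of_lt hℵ hTlt (lt_of_le_of_lt ?_ hunc)
        exact ciSup_le' fun i => le_of_lt (finset_card_lt_aleph0 _)
      set Bad : Set ι := ⋃ x : B, {i : ι | (x : X) ∈ a i} with hBaddef
      have hBad : #Bad < κ := by
        refine lt_of_le_of_lt (mk_iUnion_le _) ?_
        exact mul_lt_of_lt hℵ hB (iSup_lt_of_isRegular hreg hB fun x => h x.1)
      have hsmall : #(↥(T ∪ Bad)) < κ :=
        lt_of_le_of_lt (mk_union_le _ _) (add_lt_of_lt hℵ hTlt hBad)
      have hne : T ∪ Bad ≠ Set.univ := by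
        intro e
        rw [e, mk_univ] at hsmall
        exact absurd hι (not_le.mpr hsmall)
      obtain ⟨j, hj⟩ := (Set.ne_univ_iff_exists_notMem _).mp hne
      have hjT : j ∉ T := fun hjT => hj (Or.inl hjT)
      have hjBad : j ∉ Bad := fun hjB => hj (Or.inr hjB)
      have key : ∀ i ∈ T, a j ∩ a i = ∅ := by
        intro i hiT
        rw [Finset.eq_empty_iff_forall_notMem]
        intro z hz
        rw [Finset.mem_inter] at hz
        have hzB : z ∈ B := Set.mem_iUnion.2 ⟨⟨i, hiT⟩, by simpa using hz.2⟩
        exact hjBad (Set.mem_iUnion.2 ⟨⟨z, hzB⟩, hz.1⟩)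
      have hins : insert j T ∈ {T : Set ι | ∀ i ∈ T, ∀ j ∈ T, i ≠ j → a i ∩ a j = ∅} := by
        rintro i (rfl | hiT) k (rfl | hkT) hik
        · exact absurd rfl hik
        · exact key k hkT
        · rw [Finset.inter_comm]; exact key i hiT
        · exact hTmax.1 i hiT k hkT hik
      have := hTmax.2 hins (Set.subset_insert j T)
      exact hjT (this (Set.mem_insert j T))

theorem cond_core {Λ : Ordinal.{u}} {κ : Cardinal.{u+1}} (hreg : κ.IsRegular) (hunc : ℵ₀ < κ)
    (hΛ : 0 < Λ)
    (hsize : ∀ α : Ordinal.{u}, α < Λ → #{x : ZFSet.{u} // x.rank < α} < κ)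
    {ι : Type (u+1)} (p : ι → Cond Λ) (hp : ∀ i j, i ≠ j → ¬ Compat (p i) (p j)) :
    #ι < κ := by
  classical
  have hℵ : ℵ₀ ≤ κ := hreg.aleph0_le
  by_contra hι
  push_neg at hι
  -- domains as finsets
  let dom : ι → Finset (Ordinal.{u} × ℕ) :=
    fun i => (Set.Finite.image Prod.fst (p i).2.1).toFinset
  have hdom : ∀ i a, a ∈ dom i ↔ ∃ x, (a, x) ∈ (p i).1 := by
    intro i a
    simp only [dom, Set.Finite.mem_toFinset, Set.mem_image]
    constructor
    · rintro ⟨⟨b, x⟩, hb, rfl⟩; exact ⟨x, hb⟩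
    · rintro ⟨x, hx⟩; exact ⟨(a, x), hx, rfl⟩
  -- find a fiber of constant domain size of cardinality ≥ κ
  have hfiber : ∃ n : ULift.{u+1} ℕ, κ ≤ #{i : ι | (dom i).card = n.down} := by
    by_contra hf
    push_neg at hf
    have hcover : (Set.univ : Set ι) = ⋃ n : ULift.{u+1} ℕ, {i : ι | (dom i).card = n.down} := by
      ext i
      simp only [Set.mem_univ, Set.mem_iUnion, true_iff]
      exact ⟨⟨(dom i).card⟩, rfl⟩
    have hUn : #(⋃ n : ULift.{u+1} ℕ, {i : ι | (dom i).card = n.down}) < κ := by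
      refine lt_of_le_of_lt (mk_iUnion_le _) ?_
      refine mul_lt_of_lt hℵ ?_ (iSup_lt_of_isRegular hreg ?_ hf)
      · simpa using hunc
      · simpa using hunc
    rw [← hcover, mk_univ] at hUn
    exact absurd hι (not_le.mpr hUn)
  obtain ⟨n, hn⟩ := hfiber
  -- Δ-system
  obtain ⟨r, T, hT, hΔ⟩ := my_deltaSystem hreg hunc n.down
    (fun i : {i : ι | (dom i).card = n.down} => dom i.1)
    (fun i => le_of_eq i.2) hn
  haveI : Infinite ↥T := Cardinal.infinite_iff.mpr (hℵ.trans hT)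
  -- the root is contained in every domain of the Δ-system
  have hroot : ∀ i ∈ T, r ⊆ dom i.1 := by
    intro i hi
    obtain ⟨⟨j, hjT⟩, hne⟩ := exists_ne (⟨i, hi⟩ : ↥T)
    have hji : j ≠ i := fun e => hne (Subtype.ext e)
    have heq := hΔ i hi j hjT (Ne.symm hji)
    rw [← heq]
    exact Finset.inter_subset_left
  -- bound on first coordinates of the root
  set β₀ : Ordinal.{u} := r.sup (fun z => z.1) with hβ₀def
  have hβ₀le : ∀ z ∈ r, z.1 ≤ β₀ := fun z hz => Finset.le_sup hz
  have hβ₀ : β₀ < Λ := by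
    rw [hβ₀def, Finset.sup_lt_iff hΛ]
    intro z hz
    obtain ⟨i, hi⟩ := (inferInstance : Nonempty ↥T)
    have hzd : z ∈ dom i.1 := hroot i hi hz
    obtain ⟨x, hx⟩ := (hdom i.1 z).mp hzd
    exact ((p i.1).2.2.2 z x hx).2.1
  -- the small set of possible restrictions to the root
  set S : Set ((Ordinal.{u} × ℕ) × ZFSet.{u}) :=
    {w | w.1 ∈ r ∧ w.2.rank < β₀} with hSdef
  have hSsmall : #S < κ := by
    have hinj : Function.Injective
        (fun w : ↥S => ((⟨w.1.1, w.2.1⟩ : {z // z ∈ (r : Set (Ordinal.{u} × ℕ))}),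
          (⟨w.1.2, w.2.2⟩ : {x : ZFSet.{u} // x.rank < β₀}))) := by
      rintro ⟨⟨a, x⟩, ha, hx⟩ ⟨⟨b, y⟩, hb, hy⟩ he
      simp only [Prod.mk.injEq, Subtype.mk.injEq] at he
      exact Subtype.ext (Prod.ext he.1 he.2)
    refine lt_of_le_of_lt (mk_le_of_injective hinj) ?_
    rw [mk_prod]
    simp only [lift_id]
    exact mul_lt_of_lt hℵ (lt_trans (finset_card_lt_aleph0 r) hunc) (hsize β₀ hβ₀)
  -- the restriction map
  have hrestr : ∀ i : ↥T, ((fun w : ↥S => w.1 ∈ (p i.1.1).1) : ↥S → Prop) = (fun w => w.1 ∈ (p i.1.1).1) := fun _ => rfl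
  let t : ↥T → Finset ↥S := fun i =>
    (Set.Finite.preimage (Set.injOn_of_injective Subtype.val_injective) (p i.1.1).2.1).toFinset
  have ht : ∀ i : ↥T, ∀ w : ↥S, w ∈ t i ↔ w.1 ∈ (p i.1.1).1 := by
    intro i w
    simp [t, Set.Finite.mem_toFinset]
  have htinj : Function.Injective t := by
    intro i j he
    by_contra hne
    have hij : i.1.1 ≠ j.1.1 := by
      intro e
      exact hne (Subtype.ext (Subtype.ext e))
    obtain ⟨a, x, y, hx, hy, hxy⟩ := exists_conflict (hp i.1.1 j.1.1 hij)
    have haR : a ∈ r := by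
      have h1 : a ∈ dom i.1.1 := (hdom i.1.1 a).mpr ⟨x, hx⟩
      have h2 : a ∈ dom j.1.1 := (hdom j.1.1 a).mpr ⟨y, hy⟩
      have := hΔ i.1 i.2 j.1 j.2 (fun e => hij (congrArg Subtype.val e))
      rw [← this]
      exact Finset.mem_inter.mpr ⟨h1, h2⟩
    have hxrank : x.rank < β₀ :=
      lt_of_lt_of_le ((p i.1.1).2.2.2 a x hx).2.2 (hβ₀le a haR)
    have hwS : ((a, x) : (Ordinal.{u} × ℕ) × ZFSet.{u}) ∈ S := ⟨haR, hxrank⟩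
    have hwi : (⟨(a, x), hwS⟩ : ↥S) ∈ t i := (ht i _).mpr hx
    have hwj : (⟨(a, x), hwS⟩ : ↥S) ∈ t j := he ▸ hwi
    have hxj : ((a, x) : (Ordinal.{u} × ℕ) × ZFSet.{u}) ∈ (p j.1.1).1 := (ht j _).mp hwj
    exact hxy ((p j.1.1).2.2.1 a x y hxj hy)
  have hTle : κ ≤ #(Finset ↥S) := hT.trans (mk_le_of_injective htinj)
  rcases finite_or_infinite ↥S with hfin | hinf
  · haveI := hfin
    haveI := Fintype.ofFinite ↥S
    exact absurd hTle (not_le.mpr (lt_of_lt_of_le (lt_aleph0_of_finite (Finset ↥S)) hℵ))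
  · haveI := hinf
    rw [mk_finset_of_infinite] at hTle
    exact absurd hTle (not_le.mpr hSsmall)

/-- Let `Ω` be a regular uncountable cardinal such that for every ordinal `α < Ω.ord` there is
no surjection from `V_α = {x : ZFSet // x.rank < α}` onto a set of cardinality `Ω`.  Then the
poset of conditions for `Λ = Ω.ord` has the `Ω`-chain condition: there is no family
`(p_β)_{β < Ω.ord}` of pairwise incompatible conditions; equivalently, every
pairwise-incompatible subset has cardinality strictly less than `Ω`. -/
theorem cond_omega_cc (Ω : Cardinal.{u}) (hreg : Ω.IsRegular) (hunc : ℵ₀ < Ω)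
    (hsmall : ∀ α : Ordinal.{u}, α < Ω.ord →
      ¬ ∃ (B : Type (u + 1)) (f : {x : ZFSet.{u} // x.rank < α} → B),
          Function.Surjective f ∧ #B = Cardinal.lift.{u + 1} Ω) :
    (¬ ∃ p : {β : Ordinal.{u} // β < Ω.ord} → Cond Ω.ord,
        ∀ i j, i ≠ j → ¬ Compat (p i) (p j)) ∧
      ∀ A : Set (Cond Ω.ord),
        (∀ p ∈ A, ∀ q ∈ A, p ≠ q → ¬ Compat p q) → #A < Cardinal.lift.{u + 1} Ω := by
  set κ : Cardinal.{u+1} := Cardinal.lift.{u+1} Ω with hκdef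
  have hκunc : ℵ₀ < κ := by
    rw [hκdef, ← lift_aleph0.{u+1, u}]
    exact lift_lt.mpr hunc
  have hκreg : κ.IsRegular := by
    constructor
    · exact le_of_lt hκunc
    · have h1 : κ.ord = Ordinal.lift.{u+1} Ω.ord := (Cardinal.lift_ord Ω).symm
      rw [h1, ← Ordinal.lift_cof]
      exact lift_le.mpr hreg.2
  have hΛ : (0 : Ordinal.{u}) < Ω.ord := by
    by_contra h
    push_neg at h
    have h0 : Ω.ord = 0 := le_antisymm h zero_le
    have : Ω = 0 := by
      have := Cardinal.card_ord Ω
      rw [h0] at this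
      simpa using this.symm
    rw [this] at hunc
    exact absurd hunc (by simp)
  have hsize : ∀ α : Ordinal.{u}, α < Ω.ord → #{x : ZFSet.{u} // x.rank < α} < κ := by
    intro α hα
    by_contra h
    push_neg at h
    apply hsmall α hα
    have hne : κ ≠ 0 := ne_of_gt (lt_of_lt_of_le aleph0_pos (le_of_lt hκunc))
    haveI hBne : Nonempty κ.out := Cardinal.mk_ne_zero_iff.mp (by rwa [mk_out])
    have hle : #κ.out ≤ #{x : ZFSet.{u} // x.rank < α} := by rwa [mk_out]
    obtain ⟨f⟩ := Cardinal.le_def _ _ |>.mp hle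
    exact ⟨κ.out, Function.invFun f, Function.invFun_surjective f.injective, mk_out κ⟩
  have part2 : ∀ A : Set (Cond Ω.ord),
      (∀ p ∈ A, ∀ q ∈ A, p ≠ q → ¬ Compat p q) → #A < κ := by
    intro A hA
    exact cond_core hκreg hκunc hΛ hsize (fun i : ↥A => i.1)
      (fun i j hij => hA i.1 i.2 j.1 j.2 (fun e => hij (Subtype.ext e)))
  refine ⟨?_, part2⟩
  rintro ⟨p, hp⟩
  have hcard : #{β : Ordinal.{u} // β < Ω.ord} = κ := by
    have : #(Set.Iio Ω.ord) = Cardinal.lift.{u+1} Ω.ord.card := Ordinal.mk_Iio_ordinal Ω.ord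
    rw [Cardinal.card_ord] at this
    exact this
  have := cond_core hκreg hκunc hΛ hsize p hp
  rw [hcard] at this
  exact absurd this (lt_irrefl κ)
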